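/- arXiv:1203.4180 — 2 statements merged into one kernel-verified Lean document; each statement's English description precedes it below -/
import Mathlib

section
/- Let A be a Hopf algebra in a braided category with non-degenerate Hopf pairing ω, and let Λ : 𝟙 → A be a morphism. Then Λ is a left integral for A if and only if λ = ω ∘ (id_A ⊗ Λ) : A → 𝟙 is a right cointegral for A. -/
open CategoryTheory MonoidalCategory

universe v u

variable {C : Type u} [Category.{v} C] [MonoidalCategory C] [BraidedCategory C]

/-- A Hopf algebra in a braided monoidal category. -/
structure HopfAlgIn (C : Type u) [Category.{v} C] [MonoidalCategory C]
    [BraidedCategory C] where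
  A : C
  mul : A ⊗ A ⟶ A
  unit : 𝟙_ C ⟶ A
  comul : A ⟶ A ⊗ A
  counit : A ⟶ 𝟙_ C
  antipode : A ⟶ A
  antipodeInv : A ⟶ A
  mul_assoc : (α_ A A A).inv ≫ (mul ▷ A) ≫ mul = (A ◁ mul) ≫ mul
  mul_unit : (A ◁ unit) ≫ mul = (ρ_ A).hom
  unit_mul : (unit ▷ A) ≫ mul = (λ_ A).hom
  comul_assoc : comul ≫ (comul ▷ A) ≫ (α_ A A A).hom = comul ≫ (A ◁ comul)
  comul_counit : comul ≫ (A ◁ counit) ≫ (ρ_ A).hom = 𝟙 A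
  counit_comul : comul ≫ (counit ▷ A) ≫ (λ_ A).hom = 𝟙 A
  mul_comul : mul ≫ comul = (comul ⊗ₘ comul) ≫ tensorμ A A A A ≫ (mul ⊗ₘ mul)
  unit_comul : unit ≫ comul = (λ_ (𝟙_ C)).inv ≫ (unit ⊗ₘ unit)
  mul_counit : mul ≫ counit = (counit ⊗ₘ counit) ≫ (λ_ (𝟙_ C)).hom
  unit_counit : unit ≫ counit = 𝟙 (𝟙_ C)
  antipode_left : comul ≫ (antipode ▷ A) ≫ mul = counit ≫ unit
  antipode_right : comul ≫ (A ◁ antipode) ≫ mul = counit ≫ unit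
  antipode_invLeft : antipode ≫ antipodeInv = 𝟙 A
  antipode_invRight : antipodeInv ≫ antipode = 𝟙 A

namespace HopfAlgIn

variable (H : HopfAlgIn C)

/-- The morphism `ω(id_A ⊗ ω ⊗ id_A) : A⊗A⊗A⊗A ⟶ 𝟙` pairing the two middle factors with
the inner copy of `ω` and the two outer factors with the outer copy of `ω`. -/
def pairInner (ω : H.A ⊗ H.A ⟶ 𝟙_ C) : (H.A ⊗ H.A) ⊗ (H.A ⊗ H.A) ⟶ 𝟙_ C :=
  (α_ H.A H.A (H.A ⊗ H.A)).hom ≫ (H.A ◁ (α_ H.A H.A H.A).inv) ≫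
    (H.A ◁ (ω ▷ H.A)) ≫ (H.A ◁ (λ_ H.A).hom) ≫ ω

/-- `ω : A ⊗ A ⟶ 𝟙` is a Hopf pairing for `H`. -/
structure IsHopfPairing (ω : H.A ⊗ H.A ⟶ 𝟙_ C) : Prop where
  mul_left : (H.mul ▷ H.A) ≫ ω = ((H.A ⊗ H.A) ◁ H.comul) ≫ H.pairInner ω
  mul_right : (H.A ◁ H.mul) ≫ ω = (H.comul ▷ (H.A ⊗ H.A)) ≫ H.pairInner ω
  unit_left : (H.unit ▷ H.A) ≫ ω = (λ_ H.A).hom ≫ H.counit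
  unit_right : (H.A ◁ H.unit) ≫ ω = (ρ_ H.A).hom ≫ H.counit

/-- `Λ` is a left integral for `H`: `m(id_A ⊗ Λ) = Λ ∘ ε`. -/
def IsLeftIntegral (Λ : 𝟙_ C ⟶ H.A) : Prop :=
  (ρ_ H.A).inv ≫ (H.A ◁ Λ) ≫ H.mul = H.counit ≫ Λ

/-- `Λ` is a right integral for `H`: `m(Λ ⊗ id_A) = Λ ∘ ε`. -/
def IsRightIntegral (Λ : 𝟙_ C ⟶ H.A) : Prop :=
  (λ_ H.A).inv ≫ (Λ ▷ H.A) ≫ H.mul = H.counit ≫ Λ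

/-- `l` is a left cointegral for `H`: `(id_A ⊗ l)Δ = u ∘ l`. -/
def IsLeftCointegral (l : H.A ⟶ 𝟙_ C) : Prop :=
  H.comul ≫ (H.A ◁ l) ≫ (ρ_ H.A).hom = l ≫ H.unit

/-- `l` is a right cointegral for `H`: `(l ⊗ id_A)Δ = u ∘ l`. -/
def IsRightCointegral (l : H.A ⟶ 𝟙_ C) : Prop :=
  H.comul ≫ (l ▷ H.A) ≫ (λ_ H.A).hom = l ≫ H.unit

/-- `Ω` is an inverse of the pairing `ω`, witnessing its non-degeneracy:
`(ω ⊗ id_A)(id_A ⊗ Ω) = id_A = (id_A ⊗ ω)(Ω ⊗ id_A)`. -/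
def IsInversePairing (ω : H.A ⊗ H.A ⟶ 𝟙_ C) (Ω : 𝟙_ C ⟶ H.A ⊗ H.A) : Prop :=
  (ρ_ H.A).inv ≫ (H.A ◁ Ω) ≫ (α_ H.A H.A H.A).inv ≫ (ω ▷ H.A) ≫ (λ_ H.A).hom = 𝟙 H.A ∧
  (λ_ H.A).inv ≫ (Ω ▷ H.A) ≫ (α_ H.A H.A H.A).hom ≫ (H.A ◁ ω) ≫ (ρ_ H.A).hom = 𝟙 H.A

end HopfAlgIn

section Aux

variable (H : HopfAlgIn C) (ω : H.A ⊗ H.A ⟶ 𝟙_ C) (Ω : 𝟙_ C ⟶ H.A ⊗ H.A)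

/-- Cancellation in the first slot of a non-degenerate pairing. -/
lemma aux_cancel_first (hΩ : H.IsInversePairing ω Ω) {X : C} {F G : X ⟶ H.A}
    (h : (F ▷ H.A) ≫ ω = (G ▷ H.A) ≫ ω) : F = G := by
  have key : ∀ F : X ⟶ H.A, (ρ_ X).inv ≫ (X ◁ Ω) ≫ (α_ X H.A H.A).inv ≫
      (((F ▷ H.A) ≫ ω) ▷ H.A) ≫ (λ_ H.A).hom = F := by
    intro F
    simp only [comp_whiskerRight, Category.assoc]
    rw [← associator_inv_naturality_left_assoc, whisker_exchange_assoc,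
      ← rightUnitor_inv_naturality_assoc, hΩ.1, Category.comp_id]
  rw [← key F, ← key G, h]

/-- Cancellation in the second slot of a non-degenerate pairing. -/
lemma aux_cancel_second (hΩ : H.IsInversePairing ω Ω) {X : C} {F G : X ⟶ H.A}
    (h : (H.A ◁ F) ≫ ω = (H.A ◁ G) ≫ ω) : F = G := by
  have key : ∀ F : X ⟶ H.A, (λ_ X).inv ≫ (Ω ▷ X) ≫ (α_ H.A H.A X).hom ≫
      (H.A ◁ ((H.A ◁ F) ≫ ω)) ≫ (ρ_ H.A).hom = F := by
    intro F
    simp only [MonoidalCategory.whiskerLeft_comp, Category.assoc]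
    rw [← associator_naturality_right_assoc, ← whisker_exchange_assoc,
      ← leftUnitor_inv_naturality_assoc, hΩ.2, Category.comp_id]
  rw [← key F, ← key G, h]

/-- Two scalar-valued morphisms applied to the two tensor factors commute. -/
lemma aux_swap_scalars {X Y : C} (f : X ⟶ 𝟙_ C) (g : Y ⟶ 𝟙_ C) :
    (X ◁ g) ≫ (ρ_ X).hom ≫ f = (f ▷ Y) ≫ (λ_ Y).hom ≫ g := by
  rw [← MonoidalCategory.rightUnitor_naturality, ← MonoidalCategory.leftUnitor_naturality,
    ← tensorHom_def'_assoc, tensorHom_def_assoc, unitors_equal]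

/-- The key computation: whiskering the inner pairing with `id ⊗ Λ`. -/
lemma aux_pair_step (Λ : 𝟙_ C ⟶ H.A) :
    ((H.A ⊗ H.A) ◁ ((ρ_ H.A).inv ≫ (H.A ◁ Λ))) ≫ H.pairInner ω
      = (α_ H.A H.A H.A).hom ≫ (H.A ◁ ω) ≫ (H.A ◁ Λ) ≫ ω := by
  have inner : (H.A ◁ ((ρ_ H.A).inv ≫ (H.A ◁ Λ))) ≫ (α_ H.A H.A H.A).inv ≫
      (ω ▷ H.A) ≫ (λ_ H.A).hom = ω ≫ Λ := by
    rw [MonoidalCategory.whiskerLeft_comp, Category.assoc,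
      associator_inv_naturality_right_assoc, ← rightUnitor_tensor_inv_assoc,
      whisker_exchange_assoc, ← rightUnitor_inv_naturality_assoc,
      MonoidalCategory.leftUnitor_naturality, unitors_equal, Iso.inv_hom_id_assoc]
  have := congrArg (fun t => (α_ H.A H.A H.A).hom ≫ (H.A ◁ t) ≫ ω) inner
  rw [HopfAlgIn.pairInner, associator_naturality_right_assoc]
  simp only [MonoidalCategory.whiskerLeft_comp, Category.assoc] at this ⊢
  exact this

end Aux

/-- If `ω` is a non-degenerate Hopf pairing for `A`, then `Λ : 𝟙 ⟶ A` is a left integral if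
and only if `λ = ω ∘ (id_A ⊗ Λ)` is a right cointegral. -/
theorem leftIntegral_iff_rightCointegral (H : HopfAlgIn C) (ω : H.A ⊗ H.A ⟶ 𝟙_ C)
    (hω : H.IsHopfPairing ω) (Ω : 𝟙_ C ⟶ H.A ⊗ H.A) (hΩ : H.IsInversePairing ω Ω)
    (Λ : 𝟙_ C ⟶ H.A) :
    H.IsLeftIntegral Λ ↔ H.IsRightCointegral ((ρ_ H.A).inv ≫ (H.A ◁ Λ) ≫ ω) := by
  set L : H.A ⟶ 𝟙_ C := (ρ_ H.A).inv ≫ (H.A ◁ Λ) ≫ ω with hL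
  clear_value L
  have hLrw : (H.A ◁ Λ) ≫ ω = (ρ_ H.A).hom ≫ L := by rw [hL]; simp
  have step1 : (H.A ◁ ((ρ_ H.A).inv ≫ (H.A ◁ Λ) ≫ H.mul)) ≫ ω
      = ((H.comul ≫ (L ▷ H.A) ≫ (λ_ H.A).hom) ▷ H.A) ≫ ω := by
    rw [MonoidalCategory.whiskerLeft_comp, MonoidalCategory.whiskerLeft_comp,
      Category.assoc, Category.assoc, hω.mul_right, ← MonoidalCategory.whiskerLeft_comp_assoc,
      whisker_exchange_assoc, aux_pair_step H ω Λ, hLrw,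
      aux_swap_scalars L ω, ← associator_naturality_left_assoc,
      MonoidalCategory.leftUnitor_tensor_hom]
    simp only [Category.assoc, Iso.hom_inv_id_assoc, comp_whiskerRight]
  have step2 : (H.A ◁ (H.counit ≫ Λ)) ≫ ω = ((L ≫ H.unit) ▷ H.A) ≫ ω := by
    rw [MonoidalCategory.whiskerLeft_comp, Category.assoc, hLrw,
      aux_swap_scalars L H.counit, ← hω.unit_left]
    simp only [comp_whiskerRight, Category.assoc]
  constructor
  · intro h
    unfold HopfAlgIn.IsRightCointegral
    refine aux_cancel_first H ω Ω hΩ ?_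
    rw [← step1]
    unfold HopfAlgIn.IsLeftIntegral at h
    rw [show (ρ_ H.A).inv ≫ (H.A ◁ Λ) ≫ H.mul = H.counit ≫ Λ from h, step2]
  · intro h
    unfold HopfAlgIn.IsLeftIntegral
    refine aux_cancel_second H ω Ω hΩ ?_
    unfold HopfAlgIn.IsRightCointegral at h
    rw [step1, h, ← step2]
end

section
/- Let C be a k-additive category, D a fusion category over k, and F : D^op × D → C a k-bilinear functor. Then F has a coend, namely C₀ = ⊕_{i ∈ I} F(i,i) where I is a representative set of scalar objects of D, with dinatural transformation ρ_Y = Σ_α F(q^α_Y, p^α_Y) for any I-decomposition (p^α_Y, q^α_Y) of Y. -/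
open CategoryTheory MonoidalCategory CategoryTheory.Limits

universe v u v' u'

variable {D : Type u} [Category.{v} D] {C : Type u'} [Category.{v'} C]

variable (k : Type*) [CommRing k]

/-- An object is scalar if `k → End X`, `a ↦ a • id_X`, is bijective. -/
def IsScalarObj [Preadditive D] [CategoryTheory.Linear k D] (X : D) : Prop :=
  Function.Bijective (fun a : k => a • (𝟙 X))

variable {k}

/-- A decomposition of an object `Y` as a finite direct sum of objects from the family
`r : ι → D` (an `I`-decomposition). -/
structure IDecomp [Preadditive D] {ι : Type} (r : ι → D) (Y : D) where
  n : ℕ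
  idx : Fin n → ι
  p : ∀ a, Y ⟶ r (idx a)
  q : ∀ a, r (idx a) ⟶ Y
  orth : ∀ a b, q a ≫ p b = if h : a = b then eqToHom (by rw [h]) else 0
  complete : ∑ a, p a ≫ q a = 𝟙 Y

variable [Preadditive D] [CategoryTheory.Linear k D] [Preadditive C]
  [CategoryTheory.Linear k C] [HasFiniteBiproducts C]

/-- The candidate coend object `⨁_{i ∈ I} F(i, i)`. -/
noncomputable def coendObj (F : Dᵒᵖ × D ⥤ C) {ι : Type} [Fintype ι] (r : ι → D) : C :=
  ⨁ fun i : ι => F.obj (Opposite.op (r i), r i)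

/-- The candidate universal dinatural transformation `ρ_Y = ∑_α F(q^α_Y, p^α_Y)`. -/
noncomputable def coendRho (F : Dᵒᵖ × D ⥤ C) {ι : Type} [Fintype ι] (r : ι → D)
    (dec : ∀ Y : D, IDecomp r Y) (Y : D) :
    F.obj (Opposite.op Y, Y) ⟶ coendObj F r :=
  ∑ a, F.map ((((dec Y).q a).op, (dec Y).p a) :
        (Opposite.op Y, Y) ⟶ (Opposite.op (r ((dec Y).idx a)), r ((dec Y).idx a))) ≫
      biproduct.ι (fun i : ι => F.obj (Opposite.op (r i), r i)) ((dec Y).idx a)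

set_option linter.unusedSectionVars false

section Aux
variable (F : Dᵒᵖ × D ⥤ C)

lemma aux_split₁ {A B : D} (g : A ⟶ B) {V W : D} (v : V ⟶ W) :
    F.map ((g.op, v) : (Opposite.op B, V) ⟶ (Opposite.op A, W)) =
      F.map ((g.op, 𝟙 V) : (Opposite.op B, V) ⟶ (Opposite.op A, V)) ≫
        F.map ((𝟙 (Opposite.op A), v) : (Opposite.op A, V) ⟶ (Opposite.op A, W)) := by
  rw [← F.map_comp]
  congr 1
  simp

lemma aux_split₂ {A B : D} (g : A ⟶ B) {V W : D} (v : V ⟶ W) :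
    F.map ((g.op, v) : (Opposite.op B, V) ⟶ (Opposite.op A, W)) =
      F.map ((𝟙 (Opposite.op B), v) : (Opposite.op B, V) ⟶ (Opposite.op B, W)) ≫
        F.map ((g.op, 𝟙 W) : (Opposite.op B, W) ⟶ (Opposite.op A, W)) := by
  rw [← F.map_comp]
  congr 1
  simp

set_option linter.unusedSectionVars false

lemma aux_smul₁
    (hsmul₁ : ∀ {X Y : D} (f : X ⟶ Y) (a : k) (W : D),
      F.map (((a • f).op, 𝟙 W) : (Opposite.op Y, W) ⟶ (Opposite.op X, W)) =
        a • F.map (f.op, 𝟙 W))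
    {A B : D} (g : A ⟶ B) (a : k) {V W : D} (v : V ⟶ W) :
    F.map (((a • g).op, v) : (Opposite.op B, V) ⟶ (Opposite.op A, W)) =
      a • F.map ((g.op, v) : (Opposite.op B, V) ⟶ (Opposite.op A, W)) := by
  rw [aux_split₁, hsmul₁, Linear.smul_comp, ← aux_split₁]

lemma aux_zero₁
    (hsmul₁ : ∀ {X Y : D} (f : X ⟶ Y) (a : k) (W : D),
      F.map (((a • f).op, 𝟙 W) : (Opposite.op Y, W) ⟶ (Opposite.op X, W)) =
        a • F.map (f.op, 𝟙 W))
    {A B : D} {V W : D} (v : V ⟶ W) :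
    F.map (((0 : A ⟶ B).op, v) : (Opposite.op B, V) ⟶ (Opposite.op A, W)) = 0 := by
  have h0 : (0 : A ⟶ B) = (0 : k) • (0 : A ⟶ B) := by simp
  rw [h0, aux_smul₁ F hsmul₁, zero_smul]

lemma aux_add₁
    (hadd₁ : ∀ {X Y : D} (f g : X ⟶ Y) (W : D),
      F.map ((f.op + g.op, 𝟙 W) : (Opposite.op Y, W) ⟶ (Opposite.op X, W)) =
        F.map (f.op, 𝟙 W) + F.map (g.op, 𝟙 W))
    {A B : D} (g g' : A ⟶ B) {V W : D} (v : V ⟶ W) :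
    F.map (((g + g').op, v) : (Opposite.op B, V) ⟶ (Opposite.op A, W)) =
      F.map ((g.op, v) : (Opposite.op B, V) ⟶ (Opposite.op A, W)) +
        F.map ((g'.op, v) : (Opposite.op B, V) ⟶ (Opposite.op A, W)) := by
  rw [aux_split₁, op_add, hadd₁, Preadditive.add_comp, ← aux_split₁, ← aux_split₁]

lemma aux_smul₂
    (hsmul₂ : ∀ (W : Dᵒᵖ) {X Y : D} (f : X ⟶ Y) (a : k),
      F.map ((𝟙 W, a • f) : (W, X) ⟶ (W, Y)) = a • F.map (𝟙 W, f))
    {A B : D} (g : A ⟶ B) {V W : D} (v : V ⟶ W) (a : k) :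
    F.map ((g.op, a • v) : (Opposite.op B, V) ⟶ (Opposite.op A, W)) =
      a • F.map ((g.op, v) : (Opposite.op B, V) ⟶ (Opposite.op A, W)) := by
  rw [aux_split₂, hsmul₂, Linear.smul_comp, ← aux_split₂]

lemma aux_zero₂
    (hsmul₂ : ∀ (W : Dᵒᵖ) {X Y : D} (f : X ⟶ Y) (a : k),
      F.map ((𝟙 W, a • f) : (W, X) ⟶ (W, Y)) = a • F.map (𝟙 W, f))
    {A B : D} (g : A ⟶ B) {V W : D} :
    F.map ((g.op, (0 : V ⟶ W)) : (Opposite.op B, V) ⟶ (Opposite.op A, W)) = 0 := by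
  have h0 : (0 : V ⟶ W) = (0 : k) • (0 : V ⟶ W) := by simp
  rw [h0, aux_smul₂ F hsmul₂, zero_smul]

lemma aux_add₂
    (hadd₂ : ∀ (W : Dᵒᵖ) {X Y : D} (f g : X ⟶ Y),
      F.map ((𝟙 W, f + g) : (W, X) ⟶ (W, Y)) = F.map (𝟙 W, f) + F.map (𝟙 W, g))
    {A B : D} (g : A ⟶ B) {V W : D} (v v' : V ⟶ W) :
    F.map ((g.op, v + v') : (Opposite.op B, V) ⟶ (Opposite.op A, W)) =
      F.map ((g.op, v) : (Opposite.op B, V) ⟶ (Opposite.op A, W)) +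
        F.map ((g.op, v') : (Opposite.op B, V) ⟶ (Opposite.op A, W)) := by
  rw [aux_split₂, hadd₂, Preadditive.add_comp, ← aux_split₂, ← aux_split₂]

/-- Action of `F` on the first slot as an additive monoid hom. -/
def auxHom₁
    (hadd₁ : ∀ {X Y : D} (f g : X ⟶ Y) (W : D),
      F.map ((f.op + g.op, 𝟙 W) : (Opposite.op Y, W) ⟶ (Opposite.op X, W)) =
        F.map (f.op, 𝟙 W) + F.map (g.op, 𝟙 W))
    (hsmul₁ : ∀ {X Y : D} (f : X ⟶ Y) (a : k) (W : D),
      F.map (((a • f).op, 𝟙 W) : (Opposite.op Y, W) ⟶ (Opposite.op X, W)) =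
        a • F.map (f.op, 𝟙 W))
    {A B : D} {V W : D} (v : V ⟶ W) :
    (A ⟶ B) →+ (F.obj (Opposite.op B, V) ⟶ F.obj (Opposite.op A, W)) where
  toFun g := F.map ((g.op, v) : (Opposite.op B, V) ⟶ (Opposite.op A, W))
  map_zero' := aux_zero₁ F hsmul₁ v
  map_add' g g' := aux_add₁ F hadd₁ g g' v

/-- Action of `F` on the second slot as an additive monoid hom. -/
def auxHom₂
    (hadd₂ : ∀ (W : Dᵒᵖ) {X Y : D} (f g : X ⟶ Y),
      F.map ((𝟙 W, f + g) : (W, X) ⟶ (W, Y)) = F.map (𝟙 W, f) + F.map (𝟙 W, g))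
    (hsmul₂ : ∀ (W : Dᵒᵖ) {X Y : D} (f : X ⟶ Y) (a : k),
      F.map ((𝟙 W, a • f) : (W, X) ⟶ (W, Y)) = a • F.map (𝟙 W, f))
    {A B : D} (g : A ⟶ B) {V W : D} :
    (V ⟶ W) →+ (F.obj (Opposite.op B, V) ⟶ F.obj (Opposite.op A, W)) where
  toFun v := F.map ((g.op, v) : (Opposite.op B, V) ⟶ (Opposite.op A, W))
  map_zero' := aux_zero₂ F hsmul₂ g
  map_add' v v' := aux_add₂ F hadd₂ g v v'

end Aux

section Key

variable (F : Dᵒᵖ × D ⥤ C)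

lemma keyA {J : Type} [Fintype J] (r : J → D)
    (hsmul₁ : ∀ {X Y : D} (f : X ⟶ Y) (a : k) (W : D),
      F.map (((a • f).op, 𝟙 W) : (Opposite.op Y, W) ⟶ (Opposite.op X, W)) =
        a • F.map (f.op, 𝟙 W))
    (hsmul₂ : ∀ (W : Dᵒᵖ) {X Y : D} (f : X ⟶ Y) (a : k),
      F.map ((𝟙 W, a • f) : (W, X) ⟶ (W, Y)) = a • F.map (𝟙 W, f))
    (hscalar : ∀ i : J, IsScalarObj k (r i))
    (hdistinct : ∀ i j : J, Nonempty (r i ≅ r j) → i = j)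
    (hzero : ∀ i j : D, IsScalarObj k i → IsScalarObj k j → IsEmpty (i ≅ j) →
      ∀ f : i ⟶ j, f = 0)
    (i j : J) (h : r i ⟶ r j) {Z₁ Z₂ : D} (u : r j ⟶ Z₁) (v : Z₂ ⟶ r i) :
    F.map (((h ≫ u).op, v) : (Opposite.op Z₁, Z₂) ⟶ (Opposite.op (r i), r i)) ≫
        biproduct.ι (fun t : J => F.obj (Opposite.op (r t), r t)) i =
      F.map ((u.op, v ≫ h) : (Opposite.op Z₁, Z₂) ⟶ (Opposite.op (r j), r j)) ≫
        biproduct.ι (fun t : J => F.obj (Opposite.op (r t), r t)) j := by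
  by_cases hij : i = j
  · subst hij
    obtain ⟨c, hc⟩ := (hscalar i).2 h
    simp only at hc
    rw [← hc]
    rw [show (c • 𝟙 (r i)) ≫ u = c • u by simp]
    rw [show v ≫ (c • 𝟙 (r i)) = c • v by simp]
    rw [aux_smul₁ F hsmul₁, aux_smul₂ F hsmul₂]
  · have h0 : h = 0 := hzero _ _ (hscalar i) (hscalar j)
      ⟨fun e => hij (hdistinct i j ⟨e⟩)⟩ h
    rw [h0, zero_comp, comp_zero, aux_zero₁ F hsmul₁, aux_zero₂ F hsmul₂,
      zero_comp, zero_comp]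

lemma keyB {J : Type} [Fintype J] (r : J → D)
    (hadd₁ : ∀ {X Y : D} (f g : X ⟶ Y) (W : D),
      F.map ((f.op + g.op, 𝟙 W) : (Opposite.op Y, W) ⟶ (Opposite.op X, W)) =
        F.map (f.op, 𝟙 W) + F.map (g.op, 𝟙 W))
    (hsmul₁ : ∀ {X Y : D} (f : X ⟶ Y) (a : k) (W : D),
      F.map (((a • f).op, 𝟙 W) : (Opposite.op Y, W) ⟶ (Opposite.op X, W)) =
        a • F.map (f.op, 𝟙 W))
    (hsmul₂ : ∀ (W : Dᵒᵖ) {X Y : D} (f : X ⟶ Y) (a : k),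
      F.map ((𝟙 W, a • f) : (W, X) ⟶ (W, Y)) = a • F.map (𝟙 W, f))
    (hscalar : ∀ i : J, IsScalarObj k (r i))
    (hdistinct : ∀ i j : J, Nonempty (r i ≅ r j) → i = j)
    (hzero : ∀ i j : D, IsScalarObj k i → IsScalarObj k j → IsEmpty (i ≅ j) →
      ∀ f : i ⟶ j, f = 0)
    (dec : ∀ Y : D, IDecomp r Y) (i : J) :
    coendRho F r dec (r i) =
      biproduct.ι (fun t : J => F.obj (Opposite.op (r t), r t)) i := by
  unfold coendRho coendObj
  have step : ∀ a : Fin (dec (r i)).n,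
      F.map (((((dec (r i)).q a).op, (dec (r i)).p a)) :
          (Opposite.op (r i), r i) ⟶
            (Opposite.op (r ((dec (r i)).idx a)), r ((dec (r i)).idx a))) ≫
          biproduct.ι (fun t : J => F.obj (Opposite.op (r t), r t)) ((dec (r i)).idx a)
        = F.map ((((dec (r i)).p a ≫ (dec (r i)).q a).op, 𝟙 (r i)) :
            (Opposite.op (r i), r i) ⟶ (Opposite.op (r i), r i)) ≫
          biproduct.ι (fun t : J => F.obj (Opposite.op (r t), r t)) i := by
    intro a
    have h := keyA F r hsmul₁ hsmul₂ hscalar hdistinct hzero i ((dec (r i)).idx a)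
      ((dec (r i)).p a) ((dec (r i)).q a) (𝟙 (r i))
    rw [Category.id_comp] at h
    exact h.symm
  rw [Finset.sum_congr rfl (fun a _ => step a), ← Preadditive.sum_comp]
  have hs := map_sum (auxHom₁ F hadd₁ hsmul₁ (A := r i) (B := r i) (𝟙 (r i)))
      (fun a => (dec (r i)).p a ≫ (dec (r i)).q a) Finset.univ
  simp only [auxHom₁, AddMonoidHom.coe_mk, ZeroHom.coe_mk] at hs
  rw [← hs, (dec (r i)).complete]
  rw [show (((𝟙 (r i)).op, 𝟙 (r i)) :
      (Opposite.op (r i), r i) ⟶ (Opposite.op (r i), r i)) =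
      𝟙 (Opposite.op (r i), r i) from rfl, F.map_id, Category.id_comp]

lemma keyDin {J : Type} [Fintype J] (r : J → D)
    (hadd₁ : ∀ {X Y : D} (f g : X ⟶ Y) (W : D),
      F.map ((f.op + g.op, 𝟙 W) : (Opposite.op Y, W) ⟶ (Opposite.op X, W)) =
        F.map (f.op, 𝟙 W) + F.map (g.op, 𝟙 W))
    (hsmul₁ : ∀ {X Y : D} (f : X ⟶ Y) (a : k) (W : D),
      F.map (((a • f).op, 𝟙 W) : (Opposite.op Y, W) ⟶ (Opposite.op X, W)) =
        a • F.map (f.op, 𝟙 W))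
    (hadd₂ : ∀ (W : Dᵒᵖ) {X Y : D} (f g : X ⟶ Y),
      F.map ((𝟙 W, f + g) : (W, X) ⟶ (W, Y)) = F.map (𝟙 W, f) + F.map (𝟙 W, g))
    (hsmul₂ : ∀ (W : Dᵒᵖ) {X Y : D} (f : X ⟶ Y) (a : k),
      F.map ((𝟙 W, a • f) : (W, X) ⟶ (W, Y)) = a • F.map (𝟙 W, f))
    (hscalar : ∀ i : J, IsScalarObj k (r i))
    (hdistinct : ∀ i j : J, Nonempty (r i ≅ r j) → i = j)
    (hzero : ∀ i j : D, IsScalarObj k i → IsScalarObj k j → IsEmpty (i ≅ j) →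
      ∀ f : i ⟶ j, f = 0)
    (dec : ∀ Y : D, IDecomp r Y) {X Y : D} (f : X ⟶ Y) :
    F.map ((f.op, 𝟙 X) : (Opposite.op Y, X) ⟶ (Opposite.op X, X)) ≫ coendRho F r dec X =
      F.map ((𝟙 (Opposite.op Y), f) : (Opposite.op Y, X) ⟶ (Opposite.op Y, Y)) ≫
        coendRho F r dec Y := by
  unfold coendRho coendObj
  rw [Preadditive.comp_sum, Preadditive.comp_sum]
  have lhs : ∀ a : Fin (dec X).n,
      F.map ((f.op, 𝟙 X) : (Opposite.op Y, X) ⟶ (Opposite.op X, X)) ≫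
          (F.map (((((dec X).q a).op, (dec X).p a)) :
              (Opposite.op X, X) ⟶
                (Opposite.op (r ((dec X).idx a)), r ((dec X).idx a))) ≫
            biproduct.ι (fun t : J => F.obj (Opposite.op (r t), r t)) ((dec X).idx a))
        = ∑ b : Fin (dec Y).n,
            F.map (((((dec Y).q b).op,
                (dec X).p a ≫ ((dec X).q a ≫ f ≫ (dec Y).p b))) :
              (Opposite.op Y, X) ⟶
                (Opposite.op (r ((dec Y).idx b)), r ((dec Y).idx b))) ≫
              biproduct.ι (fun t : J => F.obj (Opposite.op (r t), r t)) ((dec Y).idx b) := by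
    intro a
    rw [← Category.assoc, ← F.map_comp]
    simp only [prod_comp, Category.id_comp, ← op_comp]
    have e2 : (dec X).q a ≫ f =
        ∑ b : Fin (dec Y).n, ((dec X).q a ≫ f ≫ (dec Y).p b) ≫ (dec Y).q b := by
      calc (dec X).q a ≫ f = ((dec X).q a ≫ f) ≫ 𝟙 Y := by rw [Category.comp_id]
        _ = ((dec X).q a ≫ f) ≫ ∑ b : Fin (dec Y).n, (dec Y).p b ≫ (dec Y).q b := by
              rw [(dec Y).complete]
        _ = ∑ b : Fin (dec Y).n, ((dec X).q a ≫ f ≫ (dec Y).p b) ≫ (dec Y).q b := by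
              rw [Preadditive.comp_sum]; simp only [Category.assoc]
    rw [e2]
    have hs := map_sum (auxHom₁ F hadd₁ hsmul₁
        (A := r ((dec X).idx a)) (B := Y) ((dec X).p a))
      (fun b => ((dec X).q a ≫ f ≫ (dec Y).p b) ≫ (dec Y).q b) Finset.univ
    simp only [auxHom₁, AddMonoidHom.coe_mk, ZeroHom.coe_mk] at hs
    rw [hs, Preadditive.sum_comp]
    refine Finset.sum_congr rfl fun b _ => ?_
    exact keyA F r hsmul₁ hsmul₂ hscalar hdistinct hzero ((dec X).idx a)
      ((dec Y).idx b) ((dec X).q a ≫ f ≫ (dec Y).p b) ((dec Y).q b) ((dec X).p a)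
  have rhs : ∀ b : Fin (dec Y).n,
      F.map ((𝟙 (Opposite.op Y), f) : (Opposite.op Y, X) ⟶ (Opposite.op Y, Y)) ≫
          (F.map (((((dec Y).q b).op, (dec Y).p b)) :
              (Opposite.op Y, Y) ⟶
                (Opposite.op (r ((dec Y).idx b)), r ((dec Y).idx b))) ≫
            biproduct.ι (fun t : J => F.obj (Opposite.op (r t), r t)) ((dec Y).idx b))
        = ∑ a : Fin (dec X).n,
            F.map (((((dec Y).q b).op,
                (dec X).p a ≫ ((dec X).q a ≫ f ≫ (dec Y).p b))) :
              (Opposite.op Y, X) ⟶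
                (Opposite.op (r ((dec Y).idx b)), r ((dec Y).idx b))) ≫
              biproduct.ι (fun t : J => F.obj (Opposite.op (r t), r t)) ((dec Y).idx b) := by
    intro b
    rw [← Category.assoc, ← F.map_comp]
    simp only [prod_comp, Category.id_comp]
    have e2 : f ≫ (dec Y).p b =
        ∑ a : Fin (dec X).n, (dec X).p a ≫ ((dec X).q a ≫ f ≫ (dec Y).p b) := by
      calc f ≫ (dec Y).p b = 𝟙 X ≫ f ≫ (dec Y).p b := by rw [Category.id_comp]
        _ = (∑ a : Fin (dec X).n, (dec X).p a ≫ (dec X).q a) ≫ f ≫ (dec Y).p b := by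
              rw [(dec X).complete]
        _ = ∑ a : Fin (dec X).n, (dec X).p a ≫ ((dec X).q a ≫ f ≫ (dec Y).p b) := by
              rw [Preadditive.sum_comp]; simp only [Category.assoc]
    conv_lhs => rw [e2]
    have hs := map_sum (auxHom₂ F hadd₂ hsmul₂ ((dec Y).q b) (V := X))
      (fun a => (dec X).p a ≫ ((dec X).q a ≫ f ≫ (dec Y).p b)) Finset.univ
    simp only [auxHom₂, AddMonoidHom.coe_mk, ZeroHom.coe_mk] at hs
    rw [hs, Preadditive.sum_comp]
  rw [Finset.sum_congr rfl (fun a _ => lhs a),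
    Finset.sum_congr rfl (fun b _ => rhs b), Finset.sum_comm]


end Key


/-- If `D` is a fusion category over `k`, `C` is `k`-additive and `F : Dᵒᵖ × D ⥤ C` is
`k`-bilinear, then `(⨁_{i ∈ I} F(i,i), ρ)` is a coend of `F`: `ρ` is dinatural, and any
dinatural transformation from `F` factors uniquely through it. -/
theorem fusion_coend [MonoidalCategory D]
    (F : Dᵒᵖ × D ⥤ C)
    (hadd₁ : ∀ {X Y : D} (f g : X ⟶ Y) (W : D),
      F.map ((f.op + g.op, 𝟙 W) : (Opposite.op Y, W) ⟶ (Opposite.op X, W)) =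
        F.map (f.op, 𝟙 W) + F.map (g.op, 𝟙 W))
    (hsmul₁ : ∀ {X Y : D} (f : X ⟶ Y) (a : k) (W : D),
      F.map (((a • f).op, 𝟙 W) : (Opposite.op Y, W) ⟶ (Opposite.op X, W)) =
        a • F.map (f.op, 𝟙 W))
    (hadd₂ : ∀ (W : Dᵒᵖ) {X Y : D} (f g : X ⟶ Y),
      F.map ((𝟙 W, f + g) : (W, X) ⟶ (W, Y)) = F.map (𝟙 W, f) + F.map (𝟙 W, g))
    (hsmul₂ : ∀ (W : Dᵒᵖ) {X Y : D} (f : X ⟶ Y) (a : k),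
      F.map ((𝟙 W, a • f) : (W, X) ⟶ (W, Y)) = a • F.map (𝟙 W, f))
    (ι : Type) [Fintype ι] (r : ι → D)
    (hscalar : ∀ i : ι, IsScalarObj k (r i))
    (hdistinct : ∀ i j : ι, Nonempty (r i ≅ r j) → i = j)
    (hrep : ∀ X : D, IsScalarObj k X → ∃ i : ι, Nonempty (r i ≅ X))
    (hzero : ∀ i j : D, IsScalarObj k i → IsScalarObj k j → IsEmpty (i ≅ j) →
      ∀ f : i ⟶ j, f = 0)
    (hunit : IsScalarObj k (𝟙_ D))
    (dec : ∀ Y : D, IDecomp r Y) :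
    (∀ {X Y : D} (f : X ⟶ Y),
      F.map ((f.op, 𝟙 X) : (Opposite.op Y, X) ⟶ (Opposite.op X, X)) ≫ coendRho F r dec X =
        F.map ((𝟙 (Opposite.op Y), f) : (Opposite.op Y, X) ⟶ (Opposite.op Y, Y)) ≫
          coendRho F r dec Y) ∧
    (∀ (Z : C) (d : ∀ Y : D, F.obj (Opposite.op Y, Y) ⟶ Z),
      (∀ {X Y : D} (f : X ⟶ Y),
        F.map ((f.op, 𝟙 X) : (Opposite.op Y, X) ⟶ (Opposite.op X, X)) ≫ d X =
          F.map ((𝟙 (Opposite.op Y), f) : (Opposite.op Y, X) ⟶ (Opposite.op Y, Y)) ≫ d Y) →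
      ∃! φ : coendObj F r ⟶ Z, ∀ Y : D, coendRho F r dec Y ≫ φ = d Y) := by
  constructor
  · intro X Y f
    exact keyDin F r hadd₁ hsmul₁ hadd₂ hsmul₂ hscalar hdistinct hzero dec f
  · intro Z d hd
    refine ⟨biproduct.desc (fun i => d (r i)), fun Y => ?_, fun ψ hψ => ?_⟩
    · unfold coendRho coendObj
      rw [Preadditive.sum_comp]
      simp only [Category.assoc, biproduct.ι_desc]
      have step : ∀ a : Fin (dec Y).n,
          F.map (((((dec Y).q a).op, (dec Y).p a)) :
              (Opposite.op Y, Y) ⟶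
                (Opposite.op (r ((dec Y).idx a)), r ((dec Y).idx a))) ≫
            d (r ((dec Y).idx a))
          = F.map ((((dec Y).p a ≫ (dec Y).q a).op, 𝟙 Y) :
              (Opposite.op Y, Y) ⟶ (Opposite.op Y, Y)) ≫ d Y := by
        intro a
        rw [aux_split₁ F ((dec Y).q a) ((dec Y).p a), Category.assoc,
          ← hd ((dec Y).p a), ← Category.assoc, ← F.map_comp]
        simp only [prod_comp, Category.comp_id, ← op_comp]
      rw [Finset.sum_congr rfl (fun a _ => step a), ← Preadditive.sum_comp]
      have hs := map_sum (auxHom₁ F hadd₁ hsmul₁ (A := Y) (B := Y) (𝟙 Y))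
          (fun a => (dec Y).p a ≫ (dec Y).q a) Finset.univ
      simp only [auxHom₁, AddMonoidHom.coe_mk, ZeroHom.coe_mk] at hs
      rw [← hs, (dec Y).complete]
      rw [show (((𝟙 Y).op, 𝟙 Y) : (Opposite.op Y, Y) ⟶ (Opposite.op Y, Y)) =
        𝟙 (Opposite.op Y, Y) from rfl, F.map_id, Category.id_comp]
    · refine biproduct.hom_ext' _ _ fun i => ?_
      rw [biproduct.ι_desc,
        ← hψ (r i), keyB F r hadd₁ hsmul₁ hsmul₂ hscalar hdistinct hzero dec i]
      rfl
end
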